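/- For every natural number k ≥ 1, every graph G on n vertices with more than k·n edges contains a path with at least 2k+1 edges. -/

import Mathlib

namespace Stmt14

set_option linter.unusedSectionVars false

variable {V : Type*} [Fintype V] [DecidableEq V]

/-- degree within a finset -/
def degIn (G : SimpleGraph V) [DecidableRel G.Adj] (s : Finset V) (v : V) : ℕ :=
  (s.filter (G.Adj v)).card

/-- sum of degrees within a finset -/
def dsum (G : SimpleGraph V) [DecidableRel G.Adj] (s : Finset V) : ℕ :=
  ∑ v ∈ s, degIn G s v

variable {G : SimpleGraph V} [DecidableRel G.Adj]

lemma degIn_lt_card {s : Finset V} {v : V} (hv : v ∈ s) : degIn G s v + 1 ≤ s.card := by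
  have h : s.filter (G.Adj v) ⊆ s.erase v := by
    intro w hw
    simp only [Finset.mem_filter] at hw
    exact Finset.mem_erase.2 ⟨fun h => G.irrefl (h ▸ hw.2), hw.1⟩
  have := Finset.card_le_card h
  have := Finset.card_erase_of_mem hv
  have hpos : 1 ≤ s.card := Finset.card_pos.2 ⟨v, hv⟩
  unfold degIn
  omega

lemma dsum_univ : dsum G Finset.univ = 2 * G.edgeFinset.card := by
  have : ∀ v, degIn G Finset.univ v = G.degree v := by
    intro v
    rw [degIn, ← SimpleGraph.neighborFinset_eq_filter, SimpleGraph.degree]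
  rw [dsum]
  simp_rw [this]
  exact SimpleGraph.sum_degrees_eq_twice_card_edges G

lemma dsum_erase {s : Finset V} {v : V} (hv : v ∈ s) :
    dsum G s ≤ dsum G (s.erase v) + 2 * degIn G s v := by
  have hsplit : dsum G s = degIn G s v + ∑ x ∈ s.erase v, degIn G s x := by
    rw [dsum, ← Finset.add_sum_erase _ _ hv]
  have hterm : ∀ x ∈ s.erase v, degIn G s x ≤ degIn G (s.erase v) x + (if G.Adj x v then 1 else 0) := by
    intro x _
    unfold degIn
    conv_lhs => rw [← Finset.insert_erase hv]
    rw [Finset.filter_insert]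
    split
    · exact (Finset.card_insert_le _ _).trans (by simp)
    · simp
  have hsum : ∑ x ∈ s.erase v, degIn G s x ≤
      dsum G (s.erase v) + ∑ x ∈ s.erase v, (if G.Adj x v then 1 else 0) := by
    rw [dsum, ← Finset.sum_add_distrib]
    exact Finset.sum_le_sum hterm
  have hcnt : ∑ x ∈ s.erase v, (if G.Adj x v then 1 else 0) ≤ degIn G s v := by
    rw [← Finset.card_filter]
    apply Finset.card_le_card
    intro x hx
    simp only [Finset.mem_filter, Finset.mem_erase] at hx ⊢
    exact ⟨hx.1.2, hx.2.symm⟩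
  omega


lemma dsum_split {s t : Finset V} (hts : t ⊆ s)
    (hsep : ∀ x ∈ t, ∀ y ∈ s \ t, ¬ G.Adj x y) :
    dsum G s = dsum G t + dsum G (s \ t) := by
  have hdisj : Disjoint t (s \ t) := Finset.disjoint_sdiff
  have hun : t ∪ (s \ t) = s := Finset.union_sdiff_of_subset hts
  have h1 : ∀ x ∈ t, degIn G s x = degIn G t x := by
    intro x hx
    unfold degIn
    congr 1
    apply Finset.Subset.antisymm
    · intro w hw
      simp only [Finset.mem_filter] at hw ⊢
      refine ⟨?_, hw.2⟩
      by_contra hwt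
      exact hsep x hx w (Finset.mem_sdiff.2 ⟨hw.1, hwt⟩) hw.2
    · exact Finset.filter_subset_filter _ hts
  have h2 : ∀ y ∈ s \ t, degIn G s y = degIn G (s \ t) y := by
    intro y hy
    unfold degIn
    congr 1
    apply Finset.Subset.antisymm
    · intro w hw
      simp only [Finset.mem_filter] at hw ⊢
      refine ⟨Finset.mem_sdiff.2 ⟨hw.1, ?_⟩, hw.2⟩
      intro hwt
      exact hsep w hwt y hy (G.adj_symm hw.2)
    · exact Finset.filter_subset_filter _ (Finset.sdiff_subset.trans (le_refl s))
  calc dsum G s = ∑ v ∈ t ∪ (s \ t), degIn G s v := by rw [hun, dsum]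
    _ = ∑ v ∈ t, degIn G s v + ∑ v ∈ s \ t, degIn G s v := Finset.sum_union hdisj
    _ = dsum G t + dsum G (s \ t) := by
        rw [dsum, dsum, Finset.sum_congr rfl h1, Finset.sum_congr rfl h2]

/-- A "chain": an injective sequence of `L+1` vertices inside `s` with consecutive
vertices adjacent. -/
def Chn (G : SimpleGraph V) (s : Finset V) (g : ℕ → V) (L : ℕ) : Prop :=
  (∀ i, i < L → G.Adj (g i) (g (i+1))) ∧
  (∀ i, i ≤ L → ∀ j, j ≤ L → g i = g j → i = j) ∧
  (∀ i, i ≤ L → g i ∈ s)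

lemma Chn.card_bound {s : Finset V} {g : ℕ → V} {L : ℕ} (h : Chn G s g L) :
    L + 1 ≤ s.card := by
  obtain ⟨-, hinj, hmem⟩ := h
  have himg : (Finset.range (L+1)).image g ⊆ s := by
    intro x hx
    simp only [Finset.mem_image, Finset.mem_range] at hx
    obtain ⟨i, hi, rfl⟩ := hx
    exact hmem i (by omega)
  have hcard : ((Finset.range (L+1)).image g).card = L + 1 := by
    rw [Finset.card_image_of_injOn, Finset.card_range]
    intro i hi j hj hij
    simp only [Finset.coe_range, Set.mem_Iio] at hi hj
    exact hinj i (by omega) j (by omega) hij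
  calc L + 1 = _ := hcard.symm
    _ ≤ s.card := Finset.card_le_card himg

lemma walk_of_chain (G : SimpleGraph V) :
    ∀ (L : ℕ) (g : ℕ → V), (∀ i, i < L → G.Adj (g i) (g (i+1))) →
    (∀ i, i ≤ L → ∀ j, j ≤ L → g i = g j → i = j) →
    ∃ p : G.Walk (g 0) (g L), p.IsPath ∧ p.length = L ∧
      ∀ x ∈ p.support, ∃ i, i ≤ L ∧ g i = x := by
  intro L
  induction L with
  | zero =>
    intro g _ _
    exact ⟨SimpleGraph.Walk.nil, SimpleGraph.Walk.IsPath.nil, rfl, by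
      intro x hx
      simp only [SimpleGraph.Walk.support_nil, List.mem_singleton] at hx
      exact ⟨0, le_rfl, hx.symm⟩⟩
  | succ L ih =>
    intro g hadj hinj
    obtain ⟨p, hp, hlen, hsupp⟩ := ih (fun n => g (n+1))
      (fun i hi => hadj (i+1) (by omega))
      (fun i hi j hj h => by
        have := hinj (i+1) (by omega) (j+1) (by omega) h; omega)
    refine ⟨SimpleGraph.Walk.cons (hadj 0 (by omega)) p, ?_, ?_, ?_⟩
    · refine hp.cons ?_
      intro hmem
      obtain ⟨i, hi, hgi⟩ := hsupp _ hmem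
      have := hinj (i+1) (by omega) 0 (by omega) hgi
      omega
    · simp [hlen]
    · intro x hx
      rw [SimpleGraph.Walk.support_cons, List.mem_cons] at hx
      rcases hx with rfl | hx
      · exact ⟨0, by omega, rfl⟩
      · obtain ⟨i, hi, hgi⟩ := hsupp x hx
        exact ⟨i+1, by omega, hgi⟩


lemma Chn.rev {s : Finset V} {g : ℕ → V} {L : ℕ} (h : Chn G s g L) :
    Chn G s (fun n => g (L - n)) L := by
  obtain ⟨hadj, hinj, hmem⟩ := h
  refine ⟨?_, ?_, ?_⟩
  · intro i hi
    have h1 : L - i = (L - (i+1)) + 1 := by omega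
    have := hadj (L - (i+1)) (by omega)
    simp only []
    rw [h1]
    exact (this.symm)
  · intro i hi j hj hij
    have := hinj (L - i) (by omega) (L - j) (by omega) hij
    omega
  · intro i hi
    exact hmem (L - i) (by omega)

lemma ext_front {s : Finset V} {g : ℕ → V} {L : ℕ} (h : Chn G s g L)
    (hmax : ∀ g', ¬ Chn G s g' (L+1)) {w : V} (hw : w ∈ s) (hadj : G.Adj w (g 0)) :
    ∃ i, i ≤ L ∧ g i = w := by
  by_contra hcon
  push_neg at hcon
  obtain ⟨hadj', hinj, hmem⟩ := h
  apply hmax (fun n => if n = 0 then w else g (n-1))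
  refine ⟨?_, ?_, ?_⟩
  · intro i hi
    match i with
    | 0 => simpa using hadj
    | (m+1) =>
      simp only [Nat.succ_ne_zero, if_false, Nat.add_sub_cancel]
      exact hadj' m (by omega)
  · intro i hi j hj hij
    match i, j with
    | 0, 0 => rfl
    | 0, (m+1) =>
      simp only [if_pos rfl, Nat.succ_ne_zero, if_false, Nat.add_sub_cancel] at hij
      exact absurd hij.symm (hcon m (by omega))
    | (m+1), 0 =>
      simp only [if_pos rfl, Nat.succ_ne_zero, if_false, Nat.add_sub_cancel] at hij
      exact absurd hij (hcon m (by omega))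
    | (m+1), (m'+1) =>
      simp only [Nat.succ_ne_zero, if_false, Nat.add_sub_cancel] at hij
      have := hinj m (by omega) m' (by omega) hij
      omega
  · intro i hi
    match i with
    | 0 => simpa using hw
    | (m+1) =>
      simp only [Nat.succ_ne_zero, if_false, Nat.add_sub_cancel]
      exact hmem m (by omega)

lemma ext_back {s : Finset V} {g : ℕ → V} {L : ℕ} (h : Chn G s g L)
    (hmax : ∀ g', ¬ Chn G s g' (L+1)) {w : V} (hw : w ∈ s) (hadj : G.Adj w (g L)) :
    ∃ i, i ≤ L ∧ g i = w := by
  have hrev := h.rev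
  have : G.Adj w ((fun n => g (L - n)) 0) := by simpa using hadj
  obtain ⟨i, hi, hgi⟩ := ext_front hrev hmax hw this
  exact ⟨L - i, by omega, hgi⟩


lemma case2 {k : ℕ} (hk : 1 ≤ k) {s : Finset V}
    (hdeg : ∀ v ∈ s, k + 1 ≤ degIn G s v) (hcard : 2*k + 2 ≤ s.card) :
    (∃ g L, Chn G s g L ∧ 2*k+1 ≤ L) ∨
    (∃ t, t ⊆ s ∧ t.Nonempty ∧ (s \ t).Nonempty ∧ ∀ x ∈ t, ∀ y ∈ s \ t, ¬ G.Adj x y) := by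
  classical
  have hsne : s.Nonempty := Finset.card_pos.mp (by omega)
  obtain ⟨v0, hv0⟩ := hsne
  set P : ℕ → Prop := fun L => ∃ g, Chn G s g L with hPdef
  have hP0 : P 0 := ⟨fun _ => v0, fun i hi => by omega, fun i hi j hj _ => by omega,
    fun i hi => hv0⟩
  set L := Nat.findGreatest P s.card with hLdef
  have hPL : P L := Nat.findGreatest_spec (Nat.zero_le _) hP0
  have hmaxP : ∀ g', ¬ Chn G s g' (L+1) := by
    intro g' hch'
    have hb : L + 2 ≤ s.card := hch'.card_bound
    have hnP : ¬ P (L+1) := Nat.findGreatest_is_greatest (n := s.card) (by omega) (by omega)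
    exact hnP ⟨g', hch'⟩
  obtain ⟨g, hch⟩ := hPL
  by_cases hbig : 2*k+1 ≤ L
  · exact Or.inl ⟨g, L, hch, hbig⟩
  have hL1 : 1 ≤ L := by
    have hd := hdeg v0 hv0
    have hfne : (s.filter (G.Adj v0)).Nonempty := Finset.card_pos.mp (by
      unfold degIn at hd; omega)
    obtain ⟨w, hw⟩ := hfne
    rw [Finset.mem_filter] at hw
    have hP1 : P 1 := by
      refine ⟨fun n => if n = 0 then v0 else w, ?_, ?_, ?_⟩
      · intro i hi
        have : i = 0 := by omega
        subst this
        simpa using hw.2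
      · intro a ha b hb hab
        match a, b with
        | 0, 0 => rfl
        | 0, 1 => simp only [if_pos rfl, if_neg one_ne_zero] at hab
                  exact absurd hab (G.ne_of_adj hw.2)
        | 1, 0 => simp only [if_pos rfl, if_neg one_ne_zero] at hab
                  exact absurd hab.symm (G.ne_of_adj hw.2)
        | 1, 1 => rfl
      · intro a ha
        match a with
        | 0 => simpa using hv0
        | 1 => simpa using hw.1
    exact Nat.le_findGreatest (show 1 ≤ s.card by omega) hP1
  have hLle : L ≤ 2*k := by omega
  obtain ⟨hadjc, hinjc, hmemc⟩ := id hch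
  set A : Finset ℕ := (Finset.range L).filter (fun i => G.Adj (g 0) (g (i+1))) with hAdef
  set B : Finset ℕ := (Finset.range L).filter (fun i => G.Adj (g L) (g i)) with hBdef
  have hA : k+1 ≤ A.card := by
    have hsurj : Set.SurjOn (fun i => g (i+1)) ↑A ↑(s.filter (G.Adj (g 0))) := by
      intro w hw
      simp only [Finset.coe_filter, Set.mem_setOf_eq] at hw
      obtain ⟨i, hi, hgi⟩ := ext_front hch hmaxP hw.1 (G.adj_symm hw.2)
      have hne : i ≠ 0 := by
        intro h; subst h
        exact G.ne_of_adj hw.2 hgi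
      refine ⟨i - 1, ?_, ?_⟩
      · simp only [hAdef, Finset.coe_filter, Set.mem_setOf_eq, Finset.mem_range]
        constructor
        · omega
        · rw [show i - 1 + 1 = i from by omega, hgi]; exact hw.2
      · simp only []
        rw [show i - 1 + 1 = i from by omega, hgi]
    calc k+1 ≤ (s.filter (G.Adj (g 0))).card := hdeg (g 0) (hmemc 0 (by omega))
      _ ≤ A.card := Finset.card_le_card_of_surjOn _ hsurj
  have hB : k+1 ≤ B.card := by
    have hsurj : Set.SurjOn (fun i => g i) ↑B ↑(s.filter (G.Adj (g L))) := by
      intro w hw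
      simp only [Finset.coe_filter, Set.mem_setOf_eq] at hw
      obtain ⟨i, hi, hgi⟩ := ext_back hch hmaxP hw.1 (G.adj_symm hw.2)
      have hne : i ≠ L := by
        intro h; subst h
        exact G.ne_of_adj hw.2 hgi
      refine ⟨i, ?_, hgi⟩
      simp only [hBdef, Finset.coe_filter, Set.mem_setOf_eq, Finset.mem_range]
      exact ⟨by omega, by rw [hgi]; exact hw.2⟩
    calc k+1 ≤ (s.filter (G.Adj (g L))).card := hdeg (g L) (hmemc L (by omega))
      _ ≤ B.card := Finset.card_le_card_of_surjOn _ hsurj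
  have hinter : (A ∩ B).Nonempty := by
    have hsub : A ∪ B ⊆ Finset.range L := by
      intro x hx
      rcases Finset.mem_union.mp hx with h | h
      · exact Finset.mem_of_mem_filter x h
      · exact Finset.mem_of_mem_filter x h
    have h1 : (A ∪ B).card + (A ∩ B).card = A.card + B.card :=
      Finset.card_union_add_card_inter A B
    have h2 : (A ∪ B).card ≤ L := by
      have := Finset.card_le_card hsub
      simpa using this
    apply Finset.card_pos.mp
    omega
  obtain ⟨i, hi⟩ := hinter
  rw [Finset.mem_inter, hAdef, hBdef, Finset.mem_filter, Finset.mem_filter,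
    Finset.mem_range] at hi
  obtain ⟨⟨hiL, hA0⟩, -, hBL⟩ := hi
  -- the cycle through all vertices of the chain
  set c : ℕ → V := fun j => if j ≤ i then g j else g (L + i + 1 - j) with hcdef
  have c_inj : ∀ a, a ≤ L → ∀ b, b ≤ L → c a = c b → a = b := by
    intro a ha b hb hab
    simp only [hcdef] at hab
    split_ifs at hab with h1 h2 h2
    · exact hinjc a (by omega) b (by omega) hab
    · have := hinjc a (by omega) (L+i+1-b) (by omega) hab; omega
    · have := hinjc (L+i+1-a) (by omega) b (by omega) hab; omega
    · have := hinjc (L+i+1-a) (by omega) (L+i+1-b) (by omega) hab; omega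
  have c_eq_g : ∀ a, a ≤ L → ∃ j, j ≤ L ∧ g j = c a := by
    intro a ha
    by_cases h : a ≤ i
    · exact ⟨a, by omega, by simp [hcdef, h]⟩
    · exact ⟨L+i+1-a, by omega, by simp [hcdef, h]⟩
  have g_eq_c : ∀ j, j ≤ L → ∃ a, a ≤ L ∧ c a = g j := by
    intro j hj
    by_cases h : j ≤ i
    · exact ⟨j, hj, by simp [hcdef, h]⟩
    · refine ⟨L+i+1-j, by omega, ?_⟩
      simp only [hcdef]
      rw [if_neg (by omega)]
      congr 1
      omega
  have c_mem : ∀ a, a ≤ L → c a ∈ s := by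
    intro a ha
    obtain ⟨j, hj, hgj⟩ := c_eq_g a ha
    rw [← hgj]
    exact hmemc j hj
  have c_adj : ∀ a, a < L → G.Adj (c a) (c (a+1)) := by
    intro a ha
    simp only [hcdef]
    rcases lt_trichotomy a i with h | h | h
    · rw [if_pos (by omega), if_pos (by omega)]
      exact hadjc a (by omega)
    · subst h
      rw [if_pos le_rfl, if_neg (by omega)]
      rw [show L + a + 1 - (a+1) = L from by omega]
      exact G.adj_symm hBL
    · rw [if_neg (by omega), if_neg (by omega)]
      rw [show L + i + 1 - a = (L + i - a) + 1 from by omega,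
        show L + i + 1 - (a+1) = L + i - a from by omega]
      exact G.adj_symm (hadjc (L + i - a) (by omega))
  have c_adj' : ∀ a, a ≤ L → G.Adj (c a) (c ((a+1) % (L+1))) := by
    intro a ha
    rcases Nat.lt_or_ge a L with h | h
    · rw [Nat.mod_eq_of_lt (by omega)]
      exact c_adj a h
    · have haL : a = L := by omega
      subst haL
      rw [Nat.mod_self]
      have hcL : c L = g (i+1) := by
        simp only [hcdef]
        rw [if_neg (by omega)]
        congr 1
        omega
      have hc0 : c 0 = g 0 := by simp [hcdef]
      rw [hcL, hc0]
      exact G.adj_symm hA0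
  have hclosed : ∀ w ∈ s, (∀ j, j ≤ L → g j ≠ w) → ∀ a, a ≤ L → ¬ G.Adj w (c a) := by
    intro w hw hnot t ht hadjw
    apply hmaxP (fun m => if m = 0 then w else c ((t + (m-1)) % (L+1)))
    have hmod : ∀ m : ℕ, (t + m) % (L+1) ≤ L := by
      intro m
      have := Nat.mod_lt (t + m) (show 0 < L + 1 from by omega)
      omega
    have hmodstep : ∀ x : ℕ, (x % (L+1) + 1) % (L+1) = (x + 1) % (L+1) := by
      intro x
      conv_rhs => rw [Nat.add_mod x 1]
      rw [Nat.mod_eq_of_lt (show (1:ℕ) < L+1 from by omega)]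
    refine ⟨?_, ?_, ?_⟩
    · intro m hm
      match m with
      | 0 =>
        simp only [if_pos rfl, if_neg one_ne_zero]
        rw [show (1:ℕ) - 1 = 0 from rfl, Nat.add_zero, Nat.mod_eq_of_lt (by omega)]
        exact hadjw
      | (r+1) =>
        simp only [if_neg (Nat.succ_ne_zero r), if_neg (Nat.succ_ne_zero (r+1)),
          Nat.add_sub_cancel]
        have key := c_adj' ((t+r) % (L+1)) (hmod r)
        rw [hmodstep (t+r)] at key
        have he : t + (r+1) = t + r + 1 := by omega
        rw [he]
        exact key
    · intro a ha b hb hab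
      match a, b with
      | 0, 0 => rfl
      | 0, (r+1) =>
        simp only [if_pos rfl, if_neg (Nat.succ_ne_zero r), Nat.add_sub_cancel] at hab
        obtain ⟨j, hj, hgj⟩ := c_eq_g ((t+r) % (L+1)) (hmod r)
        exact absurd (hgj.trans hab.symm) (hnot j hj)
      | (r+1), 0 =>
        simp only [if_pos rfl, if_neg (Nat.succ_ne_zero r), Nat.add_sub_cancel] at hab
        obtain ⟨j, hj, hgj⟩ := c_eq_g ((t+r) % (L+1)) (hmod r)
        exact absurd (hgj.trans hab) (hnot j hj)
      | (r+1), (r'+1) =>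
        simp only [if_neg (Nat.succ_ne_zero r), if_neg (Nat.succ_ne_zero r'),
          Nat.add_sub_cancel] at hab
        have heq := c_inj _ (hmod r) _ (hmod r') hab
        have hme : r ≡ r' [MOD L+1] := Nat.ModEq.add_left_cancel' t heq
        have : r % (L+1) = r' % (L+1) := hme
        rw [Nat.mod_eq_of_lt (by omega), Nat.mod_eq_of_lt (by omega)] at this
        omega
    · intro a ha
      match a with
      | 0 => simpa using hw
      | (r+1) =>
        simp only [if_neg (Nat.succ_ne_zero r), Nat.add_sub_cancel]
        exact c_mem _ (hmod r)
  -- conclude: the image of the chain is a proper closed subset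
  right
  set tIm : Finset V := (Finset.range (L+1)).image g with htdef
  have htsub : tIm ⊆ s := by
    intro x hx
    simp only [htdef, Finset.mem_image, Finset.mem_range] at hx
    obtain ⟨j, hj, rfl⟩ := hx
    exact hmemc j (by omega)
  have htne : tIm.Nonempty := ⟨g 0, by
    simp only [htdef, Finset.mem_image, Finset.mem_range]
    exact ⟨0, by omega, rfl⟩⟩
  have htcard : tIm.card ≤ L + 1 := by
    calc tIm.card ≤ (Finset.range (L+1)).card := Finset.card_image_le
      _ = L + 1 := Finset.card_range _
  have hsdne : (s \ tIm).Nonempty := by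
    apply Finset.card_pos.mp
    rw [Finset.card_sdiff_of_subset htsub]
    omega
  refine ⟨tIm, htsub, htne, hsdne, ?_⟩
  intro x hx y hy hadjxy
  simp only [htdef, Finset.mem_image, Finset.mem_range] at hx
  obtain ⟨j, hj, rfl⟩ := hx
  rw [Finset.mem_sdiff] at hy
  have hnot : ∀ j', j' ≤ L → g j' ≠ y := by
    intro j' hj' h
    exact hy.2 (by
      simp only [htdef, Finset.mem_image, Finset.mem_range]
      exact ⟨j', by omega, h⟩)
  obtain ⟨a, haL, hca⟩ := g_eq_c j (by omega)
  exact hclosed y hy.1 hnot a haL (by rw [hca]; exact G.adj_symm hadjxy)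


lemma key {k : ℕ} (hk : 1 ≤ k) :
    ∀ (n : ℕ) (s : Finset V), s.card ≤ n → 2*k*s.card < dsum G s →
    ∃ (u v : V) (p : G.Walk u v), p.IsPath ∧ 2 * k + 1 ≤ p.length := by
  intro n
  induction n with
  | zero =>
    intro s hc hd
    have hse : s = ∅ := Finset.card_eq_zero.mp (by omega)
    subst hse
    simp [dsum] at hd
  | succ n ih =>
    intro s hc hd
    by_cases hlow : ∃ v ∈ s, degIn G s v ≤ k
    · obtain ⟨v, hv, hdv⟩ := hlow
      have h3 := dsum_erase (G := G) hv
      have hce : (s.erase v).card = s.card - 1 := Finset.card_erase_of_mem hv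
      have hpos : 1 ≤ s.card := Finset.card_pos.2 ⟨v, hv⟩
      apply ih (s.erase v) (by omega)
      have key2 : 2*k*(s.card - 1) + 2*k = 2*k*s.card := by
        have h4 : (s.card - 1) + 1 = s.card := by omega
        calc 2*k*(s.card-1) + 2*k = 2*k*((s.card-1)+1) := (Nat.mul_succ _ _).symm
          _ = 2*k*s.card := by rw [h4]
      rw [hce]
      linarith
    · push_neg at hlow
      have hdeg : ∀ v ∈ s, k+1 ≤ degIn G s v := fun v hv => hlow v hv
      rcases Finset.eq_empty_or_nonempty s with rfl | hne
      · simp [dsum] at hd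
      have hub : dsum G s ≤ s.card * (s.card - 1) := by
        calc dsum G s ≤ ∑ _v ∈ s, (s.card - 1) := by
              apply Finset.sum_le_sum
              intro v hv
              have := degIn_lt_card (G := G) hv
              omega
          _ = s.card * (s.card - 1) := by
              rw [Finset.sum_const, smul_eq_mul]
      have hcard2 : 2*k + 2 ≤ s.card := by
        have h5 : 2*k*s.card < s.card*(s.card-1) := lt_of_lt_of_le hd hub
        by_contra hcon
        push_neg at hcon
        have h6 : s.card * (s.card - 1) ≤ s.card * (2*k) :=
          Nat.mul_le_mul_left _ (by omega)
        have h7 := h5.trans_le h6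
        rw [mul_comm] at h7
        exact lt_irrefl _ h7
      rcases case2 hk hdeg hcard2 with ⟨g, L, hch, hL⟩ | ⟨t, hts, htne, hsdne, hsep⟩
      · obtain ⟨p, hp, hlen, -⟩ := walk_of_chain G L g hch.1 hch.2.1
        exact ⟨g 0, g L, p, hp, by omega⟩
      · have hsplit := dsum_split hts hsep
        have h7 : (s \ t).card = s.card - t.card := Finset.card_sdiff_of_subset hts
        have h8 : t.card ≤ s.card := Finset.card_le_card hts
        have h9 : 1 ≤ (s \ t).card := Finset.card_pos.2 hsdne
        have h10 : 1 ≤ t.card := Finset.card_pos.2 htne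
        by_cases hdt : 2*k*t.card < dsum G t
        · exact ih t (by omega) hdt
        · apply ih (s \ t) (by omega)
          push_neg at hdt
          have harith : 2*k*t.card + 2*k*((s \ t).card) = 2*k*s.card := by
            rw [← Nat.mul_add]
            congr 1
            omega
          linarith

end Stmt14

/-- Every graph on `n` vertices with more than `k·n` edges (`k ≥ 1`) contains a path
with at least `2k + 1` edges. -/
theorem stmt14 {V : Type*} [Fintype V] (G : SimpleGraph V) (k : ℕ) (hk : 1 ≤ k)
    (hE : k * Fintype.card V < G.edgeSet.ncard) :
    ∃ (u v : V) (p : G.Walk u v), p.IsPath ∧ 2 * k + 1 ≤ p.length := by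
  classical
  have hcnt : G.edgeSet.ncard = G.edgeFinset.card := by
    rw [Set.ncard_eq_toFinset_card']
    congr
  have h2 : 2*k*(Finset.univ : Finset V).card < Stmt14.dsum G Finset.univ := by
    rw [Stmt14.dsum_univ, Finset.card_univ]
    rw [hcnt] at hE
    calc 2*k*Fintype.card V = 2*(k*Fintype.card V) := by ring
      _ < 2*G.edgeFinset.card := by omega
  exact Stmt14.key hk (Finset.univ.card) Finset.univ le_rfl h2
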